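/- If a, b ∈ ℤ satisfy a ≠ 0 and a² = 4b, then the lattice generated by the cyclic shifts (α,β,γ), (γ,α,β), (β,γ,α) of the roots of x³ + ax² + bx + c (with distinct real roots) has center density (√(a²−2b)/2)³ / |a(a²−3b)| = 1/(4√2), the maximal center density of a lattice packing in dimension 3. -/
import Mathlib


theorem stmt_12 (a b c : ℤ) (α β γ : ℝ) (ha : a ≠ 0) (hab : a ^ 2 = 4 * b)
    (h1 : α ≠ β) (h2 : α ≠ γ) (h3 : β ≠ γ)
    (hsum : α + β + γ = -(a : ℝ)) (hsym2 : α * β + α * γ + β * γ = (b : ℝ))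
    (hprod : α * β * γ = -(c : ℝ)) :
    (Real.sqrt ((a : ℝ) ^ 2 - 2 * (b : ℝ)) / 2) ^ 3 /
        |(a : ℝ) * ((a : ℝ) ^ 2 - 3 * (b : ℝ))| = 1 / (4 * Real.sqrt 2) := by
  have hA : (a : ℝ) ≠ 0 := Int.cast_ne_zero.mpr ha
  have hb : (b : ℝ) = (a : ℝ) ^ 2 / 4 := by
    have h : ((a : ℝ)) ^ 2 = 4 * (b : ℝ) := by exact_mod_cast hab
    linarith
  have h2b : (a : ℝ) ^ 2 - 2 * (b : ℝ) = (a : ℝ) ^ 2 / 2 := by rw [hb]; ring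
  have h3b : (a : ℝ) ^ 2 - 3 * (b : ℝ) = (a : ℝ) ^ 2 / 4 := by rw [hb]; ring
  have hs2 : Real.sqrt 2 > 0 := Real.sqrt_pos.mpr (by norm_num)
  have hsq : Real.sqrt ((a : ℝ) ^ 2 / 2) = |(a : ℝ)| / Real.sqrt 2 := by
    rw [Real.sqrt_div' _ (by positivity), Real.sqrt_sq_eq_abs]
  rw [h2b, h3b, hsq]
  have habs : |(a : ℝ) * ((a : ℝ) ^ 2 / 4)| = |(a : ℝ)| ^ 3 / 4 := by
    rw [abs_mul, abs_of_nonneg (by positivity : (0:ℝ) ≤ (a:ℝ)^2/4), ← sq_abs]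
    ring
  rw [habs]
  have haabs : |(a : ℝ)| > 0 := abs_pos.mpr hA
  have h2sq : Real.sqrt 2 * Real.sqrt 2 = 2 := Real.mul_self_sqrt (by norm_num)
  field_simp
  have h23 : Real.sqrt 2 ^ 3 = 2 * Real.sqrt 2 := by
    rw [pow_succ, sq, h2sq]
  have key : |(a:ℝ)| ^ 3 * Real.sqrt 2 ^ 3 = |(a:ℝ)| ^ 3 * (2 * Real.sqrt 2) := by rw [h23]
  ring_nf
  ring_nf at key
  linarith [key]
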